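/- Let V be a finite type, let E : Finset (Finset V) be a set of hyperedges such that every e ∈ E is nonempty, and let M : ℕ with M ≥ 1 and e.card ≤ M for every e ∈ E. For v : V let d(v) := (E.filter (fun e => v ∈ e)).card be the degree of v, and for e ∈ E let α(e) := the number of functions f : Fin M → V with Set.range f = ↑e. Define the normalized adjacency entries a : (Fin M → V) → ℝ by: a p = (e.card : ℝ) / ((d (p 0) : ℝ) * (α e : ℝ)) if there exists e ∈ E with Set.range p = ↑e (such e is unique since it equals the image of p), and a p = 0 otherwise. Then for every v : V with 0 < d v, the row sum over all index tuples with first entry v equals one: ∑_{p : Fin M → V with p 0 = v} a p = 1. -/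

import Mathlib

open scoped Classical in
theorem normalized_adjacency_row_sum_one
    (V : Type*) [Fintype V] [DecidableEq V]
    (E : Finset (Finset V)) (hE : ∀ e ∈ E, e.Nonempty)
    (M : ℕ) (hM : 1 ≤ M) (hcard : ∀ e ∈ E, e.card ≤ M)
    (d : V → ℕ) (hd : ∀ v : V, d v = (E.filter (fun e => v ∈ e)).card)
    (α : Finset V → ℕ)
    (hα : ∀ e : Finset V, α e = Fintype.card {f : Fin M → V // Set.range f = ↑e})
    (a : (Fin M → V) → ℝ)
    (ha : ∀ p : Fin M → V,
      a p = if ∃ e ∈ E, Set.range p = ↑e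
            then ((Finset.image p Finset.univ).card : ℝ) /
                   ((d (p ⟨0, hM⟩) : ℝ) * (α (Finset.image p Finset.univ) : ℝ))
            else 0) :
    ∀ v : V, 0 < d v →
      ∑ p ∈ Finset.univ.filter (fun p : Fin M → V => p ⟨0, hM⟩ = v), a p = 1 := by
  intro v hv
  set e0 : Fin M := ⟨0, hM⟩ with he0
  have hrange : ∀ p : Fin M → V, Set.range p = ↑(Finset.image p Finset.univ) := by
    intro p; simp
  -- swapping two elements of e fixes e
  have hswap : ∀ (e : Finset V) (w w' : V), w ∈ e → w' ∈ e →
      e.image (Equiv.swap w w') = e := by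
    intro e w w' hw hw'
    apply Finset.eq_of_subset_of_card_le
    · intro x hx
      simp only [Finset.mem_image] at hx
      obtain ⟨y, hy, rfl⟩ := hx
      rcases eq_or_ne y w with rfl | h1
      · simpa [Equiv.swap_apply_left] using hw'
      rcases eq_or_ne y w' with rfl | h2
      · simpa [Equiv.swap_apply_right] using hw
      · simpa [Equiv.swap_apply_of_ne_of_ne h1 h2] using hy
    · rw [Finset.card_image_of_injective _ (Equiv.injective _)]
  -- fiber counts are independent of the first coordinate
  have hc : ∀ e ∈ E, ∀ w ∈ e, ∀ w' ∈ e,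
      (Finset.univ.filter fun p : Fin M → V =>
        p e0 = w ∧ Finset.image p Finset.univ = e).card
      = (Finset.univ.filter fun p : Fin M → V =>
        p e0 = w' ∧ Finset.image p Finset.univ = e).card := by
    intro e _ w hw w' hw'
    apply Finset.card_nbij' (fun p => (Equiv.swap w w') ∘ p)
      (fun p => (Equiv.swap w w') ∘ p)
    · intro p hp
      simp only [Finset.coe_filter, Set.mem_setOf_eq, Finset.mem_filter, Finset.mem_univ, true_and] at hp ⊢
      constructor
      · simp [hp.1, Equiv.swap_apply_left]
      · rw [show (Equiv.swap w w') ∘ p = (fun x => Equiv.swap w w' x) ∘ p from rfl,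
          ← Finset.image_image, hp.2, hswap e w w' hw hw']
    · intro p hp
      simp only [Finset.coe_filter, Set.mem_setOf_eq, Finset.mem_filter, Finset.mem_univ, true_and] at hp ⊢
      constructor
      · simp [hp.1, Equiv.swap_apply_right]
      · rw [show (Equiv.swap w w') ∘ p = (fun x => Equiv.swap w w' x) ∘ p from rfl,
          ← Finset.image_image, hp.2, hswap e w w' hw hw']
    · intro p _
      funext i; simp [Equiv.swap_apply_self]
    · intro p _
      funext i; simp [Equiv.swap_apply_self]
  -- α as a filter card
  have hαcard : ∀ e : Finset V, α e =
      (Finset.univ.filter fun p : Fin M → V =>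
        Finset.image p Finset.univ = e).card := by
    intro e
    rw [hα, Fintype.card_subtype]
    congr 1
    apply Finset.filter_congr
    intro p _
    rw [hrange p, Finset.coe_inj]
  -- key counting identity
  have key : ∀ e ∈ E, v ∈ e →
      α e = e.card * (Finset.univ.filter fun p : Fin M → V =>
        p e0 = v ∧ Finset.image p Finset.univ = e).card := by
    intro e he hve
    rw [hαcard e]
    rw [Finset.card_eq_sum_card_fiberwise (t := e) (f := fun p => p e0)
      (fun p hp => by
        simp only [Finset.coe_filter, Set.mem_setOf_eq, Finset.mem_filter, Finset.mem_univ, true_and] at hp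
        rw [← hp]
        exact Finset.mem_image_of_mem p (Finset.mem_univ e0))]
    rw [Finset.sum_congr rfl (fun w hw => ?_), Finset.sum_const, smul_eq_mul]
    rw [Finset.filter_filter]
    rw [show ((Finset.univ.filter fun p : Fin M → V =>
        Finset.image p Finset.univ = e ∧ p e0 = w))
      = (Finset.univ.filter fun p : Fin M → V =>
        p e0 = w ∧ Finset.image p Finset.univ = e) from
      Finset.filter_congr fun p _ => and_comm]
    exact hc e he w hw v hve
  -- the fiber over v is nonempty
  have hfiber_pos : ∀ e ∈ E, v ∈ e →
      0 < (Finset.univ.filter fun p : Fin M → V =>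
        p e0 = v ∧ Finset.image p Finset.univ = e).card := by
    intro e he hve
    rw [Finset.card_pos]
    set l := e.toList with hl
    have hlen : l.length = e.card := Finset.length_toList e
    set f : Fin M → V := fun i => l.getD i v with hf
    have hfim : Finset.image f Finset.univ = e := by
      apply Finset.Subset.antisymm
      · intro x hx
        simp only [Finset.mem_image, Finset.mem_univ, true_and] at hx
        obtain ⟨i, rfl⟩ := hx
        by_cases h : (i : ℕ) < l.length
        · rw [hf]; dsimp only
          rw [List.getD_eq_getElem l v h]
          have : l[(i : ℕ)] ∈ l := List.getElem_mem h
          rwa [Finset.mem_toList] at this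
        · rw [hf]; dsimp only
          rw [List.getD_eq_default l v (le_of_not_gt h)]
          exact hve
      · intro x hx
        have hxl : x ∈ l := by rwa [Finset.mem_toList]
        obtain ⟨i, hi, hix⟩ := List.getElem_of_mem hxl
        have hiM : i < M := lt_of_lt_of_le hi (hlen ▸ hcard e he)
        simp only [Finset.mem_image, Finset.mem_univ, true_and]
        refine ⟨⟨i, hiM⟩, ?_⟩
        rw [hf]; dsimp only
        rw [List.getD_eq_getElem l v hi, hix]
      -- done
    have hfe0 : f e0 ∈ e := by
      rw [← hfim]
      exact Finset.mem_image_of_mem f (Finset.mem_univ e0)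
    refine ⟨(Equiv.swap v (f e0)) ∘ f, ?_⟩
    simp only [Finset.mem_filter, Finset.mem_univ, true_and]
    constructor
    · simp [Equiv.swap_apply_right]
    · rw [show (Equiv.swap v (f e0)) ∘ f = (fun x => Equiv.swap v (f e0) x) ∘ f from rfl,
        ← Finset.image_image, hfim, hswap e v (f e0) hve hfe0]
  -- decompose the sum over fibers
  set S := Finset.univ.filter (fun p : Fin M → V => p e0 = v) with hS
  have hdecomp : ∑ p ∈ S, a p
      = ∑ e ∈ (Finset.univ : Finset (Finset V)),
          ∑ p ∈ S.filter (fun p => Finset.image p Finset.univ = e), a p :=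
    (Finset.sum_fiberwise_of_maps_to
      (fun p _ => Finset.mem_univ (Finset.image p Finset.univ)) a).symm
  rw [hdecomp]
  rw [← Finset.sum_subset (Finset.subset_univ (E.filter (fun e => v ∈ e)))
    (by
      intro e _ heE
      apply Finset.sum_eq_zero
      intro p hp
      simp only [hS, Finset.filter_filter, Finset.mem_filter, Finset.mem_univ,
        true_and] at hp
      rw [ha p, if_neg]
      rintro ⟨e', he', hre'⟩
      have he'e : e' = e := by
        have : (↑e' : Set V) = ↑(Finset.image p Finset.univ) := by
          rw [← hre', hrange p]
        rw [Finset.coe_inj] at this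
        rw [this, hp.2]
      apply heE
      rw [Finset.mem_filter]
      refine ⟨he'e ▸ he', ?_⟩
      rw [← hp.2, ← hp.1]
      exact Finset.mem_image_of_mem p (Finset.mem_univ e0))]
  -- now compute the sum over edges containing v
  have hterm : ∀ e ∈ E.filter (fun e => v ∈ e),
      ∑ p ∈ S.filter (fun p => Finset.image p Finset.univ = e), a p
        = 1 / (d v : ℝ) := by
    intro e heE
    rw [Finset.mem_filter] at heE
    obtain ⟨he, hve⟩ := heE
    have hval : ∀ p ∈ S.filter (fun p => Finset.image p Finset.univ = e),
        a p = (e.card : ℝ) / ((d v : ℝ) * (α e : ℝ)) := by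
      intro p hp
      simp only [hS, Finset.filter_filter, Finset.mem_filter, Finset.mem_univ,
        true_and] at hp
      rw [ha p, if_pos ⟨e, he, by rw [hrange p, hp.2]⟩, hp.1, hp.2]
    rw [Finset.sum_congr rfl hval, Finset.sum_const, nsmul_eq_mul]
    have hNc : (S.filter (fun p => Finset.image p Finset.univ = e)).card
        = (Finset.univ.filter fun p : Fin M → V =>
            p e0 = v ∧ Finset.image p Finset.univ = e).card := by
      rw [hS, Finset.filter_filter]
    have hkey := key e he hve
    set N := (Finset.univ.filter fun p : Fin M → V =>
        p e0 = v ∧ Finset.image p Finset.univ = e).card with hN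
    have hNpos := hfiber_pos e he hve
    have hecard : 0 < e.card := Finset.card_pos.mpr (hE e he)
    have hαpos : 0 < α e := by rw [hkey]; positivity
    rw [hNc]
    have : (N : ℝ) * ((e.card : ℝ) / ((d v : ℝ) * (α e : ℝ)))
        = ((e.card * N : ℕ) : ℝ) / ((d v : ℝ) * (α e : ℝ)) := by
      push_cast; ring
    rw [this, ← hkey]
    rw [div_eq_div_iff (by positivity) (by exact_mod_cast hv.ne')]
    ring
  rw [Finset.sum_congr rfl hterm, Finset.sum_const, nsmul_eq_mul, ← hd]
  field_simp
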